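/- Let m ≤ n. If a set X ⊂ ℂ² with #X ≤ mn is essentially (m+n−3)-dependent, then all points of X lie on a curve of degree m or on a curve of degree n−3. -/
import Mathlib


open MvPolynomial

abbrev Poly2 := MvPolynomial (Fin 2) ℂ
abbrev Pt := Fin 2 → ℂ

/-- `p` is an `n`-fundamental polynomial of the point `A` with respect to the set `S`. -/
def IsFund (n : ℕ) (S : Finset Pt) (A : Pt) (p : Poly2) : Prop :=
  p.totalDegree ≤ n ∧ (∀ x ∈ S, x ≠ A → eval x p = 0) ∧ eval A p ≠ 0

/-- A finite point set is `n`-independent if each of its points has an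
`n`-fundamental polynomial. -/
def NIndep (n : ℕ) (S : Finset Pt) : Prop := ∀ A ∈ S, ∃ p : Poly2, IsFund n S A p

/-- A finite point set is essentially `k`-dependent if no point has a
`k`-fundamental polynomial. -/
def EssDep (k : ℕ) (S : Finset Pt) : Prop :=
  ∀ A ∈ S, ∀ p : Poly2, p.totalDegree ≤ k →
    (∀ x ∈ S, x ≠ A → eval x p = 0) → eval A p = 0

namespace Stmt18Aux

/-- Index type for monomials `x^a y^b` with `a + b ≤ d`. -/
abbrev Idx (d : ℕ) := {ab : Fin (d+1) × Fin (d+1) // (ab.1 : ℕ) + (ab.2 : ℕ) ≤ d}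

/-- The exponent finsupp of an index. -/
noncomputable def mkF {d : ℕ} (i : Idx d) : Fin 2 →₀ ℕ :=
  Finsupp.single 0 (i.1.1 : ℕ) + Finsupp.single 1 (i.1.2 : ℕ)

lemma mkF_apply0 {d : ℕ} (i : Idx d) : mkF i 0 = (i.1.1 : ℕ) := by
  simp [mkF, Finsupp.single_apply]

lemma mkF_apply1 {d : ℕ} (i : Idx d) : mkF i 1 = (i.1.2 : ℕ) := by
  simp [mkF, Finsupp.single_apply]

lemma mkF_inj {d : ℕ} : Function.Injective (mkF (d := d)) := by
  intro i j h
  have h0 : (i.1.1 : ℕ) = (j.1.1 : ℕ) := by rw [← mkF_apply0 i, ← mkF_apply0 j, h]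
  have h1 : (i.1.2 : ℕ) = (j.1.2 : ℕ) := by rw [← mkF_apply1 i, ← mkF_apply1 j, h]
  ext <;> assumption

lemma mkF_sum {d : ℕ} (i : Idx d) : (mkF i).sum (fun _ e => e) = (i.1.1 : ℕ) + (i.1.2 : ℕ) := by
  simp [mkF, Finsupp.sum_add_index', Finsupp.sum_single_index]

lemma two_mul_card_Idx (d : ℕ) : 2 * Fintype.card (Idx d) = (d + 1) * (d + 2) := by
  classical
  have h1 : Fintype.card (Idx d)
      = (Finset.univ.filter fun ab : Fin (d+1) × Fin (d+1) => (ab.1 : ℕ) + (ab.2 : ℕ) ≤ d).card :=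
    Fintype.card_subtype _
  have h2 : (Finset.univ.filter fun ab : Fin (d+1) × Fin (d+1) => (ab.1 : ℕ) + (ab.2 : ℕ) ≤ d).card
      = ∑ a : Fin (d+1), ∑ b : Fin (d+1), if (a : ℕ) + (b : ℕ) ≤ d then 1 else 0 := by
    rw [Finset.card_filter, ← Finset.univ_product_univ, Finset.sum_product]
  have h3 : ∀ a : Fin (d+1),
      (∑ b : Fin (d+1), if (a : ℕ) + (b : ℕ) ≤ d then 1 else 0) = d + 1 - (a : ℕ) := by
    intro a
    rw [Fin.sum_univ_eq_sum_range (fun b => if (a : ℕ) + b ≤ d then 1 else 0) (d+1)]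
    rw [← Finset.card_filter]
    have : (Finset.range (d+1)).filter (fun b => (a : ℕ) + b ≤ d) = Finset.range (d + 1 - (a : ℕ)) := by
      ext b
      simp only [Finset.mem_filter, Finset.mem_range]
      omega
    simp [this]
  have h4 : (∑ a : Fin (d+1), (d + 1 - (a : ℕ))) = ∑ a ∈ Finset.range (d+1), (d + 1 - a) :=
    Fin.sum_univ_eq_sum_range _ _
  have h5 : (∑ a ∈ Finset.range (d+1), (d + 1 - a)) = ∑ a ∈ Finset.range (d+1), (a + 1) := by
    have := Finset.sum_range_reflect (fun a => a + 1) (d+1)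
    rw [← this]
    apply Finset.sum_congr rfl
    intro x hx
    simp only [Finset.mem_range] at hx
    omega
  have h6 : (∑ a ∈ Finset.range (d+1), a) * 2 = (d + 1) * d := by
    simpa using Finset.sum_range_id_mul_two (d+1)
  have h7 : (∑ a ∈ Finset.range (d+1), (a + 1))
      = (∑ a ∈ Finset.range (d+1), a) + (d + 1) := by
    rw [Finset.sum_add_distrib]
    simp
  simp only [h1, h2]
  rw [Finset.sum_congr rfl (fun a _ => h3 a), h4, h5, h7]
  nlinarith [h6]

/-- The linear map from coefficient vectors to polynomials. -/
noncomputable def phi (d : ℕ) : (Idx d → ℂ) →ₗ[ℂ] Poly2 :=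
  ∑ i : Idx d, (monomial (mkF i)).comp (LinearMap.proj i)

lemma phi_apply (d : ℕ) (c : Idx d → ℂ) :
    phi d c = ∑ i : Idx d, monomial (mkF i) (c i) := by
  simp [phi]

lemma coeff_phi (d : ℕ) (c : Idx d → ℂ) (j : Idx d) :
    coeff (mkF j) (phi d c) = c j := by
  classical
  rw [phi_apply]
  rw [MvPolynomial.coeff_sum]
  have : ∀ i : Idx d, coeff (mkF j) (monomial (mkF i) (c i)) = if i = j then c i else 0 := by
    intro i
    rw [coeff_monomial]
    by_cases h : i = j
    · simp [h]
    · have : mkF i ≠ mkF j := fun hc => h (mkF_inj hc)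
      simp [this, h]
  rw [Finset.sum_congr rfl (fun i _ => this i)]
  simp

lemma phi_inj (d : ℕ) : Function.Injective (phi d) := by
  intro c c' h
  funext j
  have := congrArg (coeff (mkF j)) h
  rwa [coeff_phi, coeff_phi] at this

lemma totalDegree_phi_le (d : ℕ) (c : Idx d → ℂ) : (phi d c).totalDegree ≤ d := by
  rw [phi_apply]
  apply MvPolynomial.totalDegree_finsetSum_le
  intro i _
  calc (monomial (mkF i) (c i)).totalDegree ≤ (mkF i).sum fun _ e => e :=
        totalDegree_monomial_le _ _
    _ ≤ d := by rw [mkF_sum]; exact i.2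

/-- Evaluation at a point as a linear map. -/
noncomputable def evalL (x : Pt) : Poly2 →ₗ[ℂ] ℂ where
  toFun p := eval x p
  map_add' p q := by simp [eval_add]
  map_smul' s p := by simp

/-- Combined evaluation map on a finite set of points. -/
noncomputable def psi (d : ℕ) (S : Finset Pt) : (Idx d → ℂ) →ₗ[ℂ] (↥S → ℂ) :=
  (LinearMap.pi fun x : ↥S => evalL x.1).comp (phi d)

lemma psi_apply (d : ℕ) (S : Finset Pt) (c : Idx d → ℂ) (x : ↥S) :
    psi d S c x = eval x.1 (phi d c) := rfl

/-- Interpolation: few points lie on a curve of degree `d`. -/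
lemma interp (d : ℕ) (S : Finset Pt) (h : S.card < Fintype.card (Idx d)) :
    ∃ p : Poly2, p ≠ 0 ∧ p.totalDegree ≤ d ∧ ∀ x ∈ S, eval x p = 0 := by
  classical
  have hnotinj : ¬ Function.Injective (psi d S) := by
    intro hinj
    have := LinearMap.finrank_le_finrank_of_injective hinj
    rw [Module.finrank_pi, Module.finrank_pi] at this
    rw [Fintype.card_coe] at this
    omega
  have : ∃ c : Idx d → ℂ, c ≠ 0 ∧ psi d S c = 0 := by
    by_contra hc
    push_neg at hc
    apply hnotinj
    have hker : ∀ c, psi d S c = 0 → c = 0 := by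
      intro c h0
      by_contra hne
      exact (hc c hne) h0
    intro a b hab
    have : psi d S (a - b) = 0 := by rw [map_sub, hab, sub_self]
    have := hker _ this
    exact sub_eq_zero.mp this
  obtain ⟨c, hc0, hcker⟩ := this
  refine ⟨phi d c, ?_, totalDegree_phi_le d c, ?_⟩
  · intro h0
    exact hc0 (phi_inj d (by rw [h0, map_zero]))
  · intro x hx
    have := congrFun hcker ⟨x, hx⟩
    rwa [psi_apply] at this

/-- If only the zero polynomial of degree `≤ d` vanishes on `S`, then `S` has many points. -/
lemma lower (d : ℕ) (S : Finset Pt)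
    (hV : ∀ p : Poly2, p.totalDegree ≤ d → (∀ x ∈ S, eval x p = 0) → p = 0) :
    Fintype.card (Idx d) ≤ S.card := by
  classical
  have hinj : Function.Injective (psi d S) := by
    have hker : ∀ c, psi d S c = 0 → c = 0 := by
      intro c h0
      have : phi d c = 0 := by
        apply hV _ (totalDegree_phi_le d c)
        intro x hx
        have := congrFun h0 ⟨x, hx⟩
        rwa [psi_apply] at this
      exact phi_inj d (by rw [this, map_zero])
    intro a b hab
    have : psi d S (a - b) = 0 := by rw [map_sub, hab, sub_self]
    exact sub_eq_zero.mp (hker _ this)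
  have := LinearMap.finrank_le_finrank_of_injective hinj
  rwa [Module.finrank_pi, Module.finrank_pi, Fintype.card_coe] at this

/-- Extraction of an `m`-independent subset on which only `0` vanishes. -/
lemma extract (d : ℕ) : ∀ (S : Finset Pt),
    (∀ p : Poly2, p.totalDegree ≤ d → (∀ x ∈ S, eval x p = 0) → p = 0) →
    ∃ Y ⊆ S, (∀ p : Poly2, p.totalDegree ≤ d → (∀ x ∈ Y, eval x p = 0) → p = 0) ∧
      ∀ A ∈ Y, ∃ p : Poly2, p.totalDegree ≤ d ∧ (∀ x ∈ Y, x ≠ A → eval x p = 0) ∧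
        eval A p ≠ 0 := by
  classical
  intro S
  induction S using Finset.strongInduction with
  | _ S ih =>
    intro hV
    by_cases h : ∃ x ∈ S, ∀ p : Poly2, p.totalDegree ≤ d →
        (∀ y ∈ S.erase x, eval y p = 0) → p = 0
    · obtain ⟨x, hx, hVx⟩ := h
      obtain ⟨Y, hYsub, hYV, hYfund⟩ := ih (S.erase x) (Finset.erase_ssubset hx) hVx
      exact ⟨Y, hYsub.trans (Finset.erase_subset _ _), hYV, hYfund⟩
    · push_neg at h
      refine ⟨S, Finset.Subset.refl S, hV, ?_⟩
      intro A hA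
      obtain ⟨p, hdeg, hvan, hne⟩ := h A hA
      refine ⟨p, hdeg, ?_, ?_⟩
      · intro x hxS hxA
        exact hvan x (Finset.mem_erase.mpr ⟨hxA, hxS⟩)
      · intro hevalA
        apply hne
        apply hV p hdeg
        intro x hxS
        by_cases hxA : x = A
        · rw [hxA]; exact hevalA
        · exact hvan x (Finset.mem_erase.mpr ⟨hxA, hxS⟩)

end Stmt18Aux

open Stmt18Aux in
theorem stmt18 (m n : ℕ) (hmn : m ≤ n) (X : Finset Pt)
    (hcard : X.card ≤ m * n) (hdep : EssDep (m + n - 3) X) :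
    (∃ p : Poly2, p ≠ 0 ∧ p.totalDegree ≤ m ∧ ∀ x ∈ X, eval x p = 0) ∨
    (∃ q : Poly2, q ≠ 0 ∧ q.totalDegree ≤ n - 3 ∧ ∀ x ∈ X, eval x q = 0) := by
  classical
  by_cases hex : ∃ p : Poly2, p ≠ 0 ∧ p.totalDegree ≤ m ∧ ∀ x ∈ X, eval x p = 0
  · exact Or.inl hex
  right
  push_neg at hex
  have hV : ∀ p : Poly2, p.totalDegree ≤ m → (∀ x ∈ X, eval x p = 0) → p = 0 := by
    intro p hdeg hvan
    by_contra hne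
    obtain ⟨x, hxX, hxne⟩ := hex p hne hdeg
    exact hxne (hvan x hxX)
  -- extract an m-independent subset Y
  obtain ⟨Y, hYsub, hYV, hYfund⟩ := extract m X hV
  have hYcard : Fintype.card (Idx m) ≤ Y.card := lower m Y hYV
  have hXcard : Fintype.card (Idx m) ≤ X.card := lower m X hV
  have hNm : 2 * Fintype.card (Idx m) = (m+1)*(m+2) := two_mul_card_Idx m
  -- basic bounds: m ≥ 1 and n ≥ 3
  have hm1 : 1 ≤ m := by
    by_contra h
    have hm0 : m = 0 := by omega
    subst hm0
    simp only [zero_mul] at hcard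
    omega
  have hn3 : 3 ≤ n := by
    by_contra h
    have hn2 : n ≤ 2 := by omega
    have hm2 : m ≤ 2 := hmn.trans hn2
    interval_cases m <;> interval_cases n <;> omega
  -- the residual set
  set R : Finset Pt := X \ Y with hR
  have hRcard : R.card = X.card - Y.card := Finset.card_sdiff_of_subset hYsub
  have hNn : 2 * Fintype.card (Idx (n-3)) = (n-2)*(n-1) := by
    have h := two_mul_card_Idx (n-3)
    have e : (n - 3 + 1) * (n - 3 + 2) = (n-2)*(n-1) := by
      rw [show n - 3 + 1 = n - 2 from by omega, show n - 3 + 2 = n - 1 from by omega]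
    exact h.trans e
  -- key counting inequality
  have hkey : R.card < Fintype.card (Idx (n-3)) := by
    have hu : 2 * (m * n) + 2 ≤ (m+1)*(m+2) + (n-2)*(n-1) := by
      obtain ⟨c, rfl⟩ := Nat.exists_eq_add_of_le hn3
      rw [show 3 + c - 2 = c + 1 from by omega, show 3 + c - 1 = c + 2 from by omega]
      rcases Nat.lt_or_ge m (c+1) with h | h
      · obtain ⟨w, rfl⟩ := Nat.exists_eq_add_of_le (by omega : m ≤ c)
        nlinarith
      · have : m = c+1 ∨ m = c+2 ∨ m = c+3 := by omega
        rcases this with rfl | rfl | rfl <;> ring_nf <;> nlinarith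
    omega
  obtain ⟨q, hq0, hqdeg, hqvan⟩ := interp (n-3) R hkey
  refine ⟨q, hq0, hqdeg, ?_⟩
  -- q vanishes on Y as well, by essential dependence
  have hqY : ∀ A ∈ Y, eval A q = 0 := by
    intro A hA
    obtain ⟨p, hpdeg, hpvan, hpne⟩ := hYfund A hA
    have hprod : (p * q).totalDegree ≤ m + n - 3 := by
      calc (p * q).totalDegree ≤ p.totalDegree + q.totalDegree := totalDegree_mul p q
        _ ≤ m + (n - 3) := Nat.add_le_add hpdeg hqdeg
        _ = m + n - 3 := by omega
    have hvanX : ∀ x ∈ X, x ≠ A → eval x (p * q) = 0 := by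
      intro x hxX hxA
      rw [eval_mul]
      by_cases hxY : x ∈ Y
      · rw [hpvan x hxY hxA, zero_mul]
      · have : x ∈ R := Finset.mem_sdiff.mpr ⟨hxX, hxY⟩
        rw [hqvan x this, mul_zero]
    have := hdep A (hYsub hA) (p * q) hprod hvanX
    rw [eval_mul] at this
    exact (mul_eq_zero.mp this).resolve_left hpne
  intro x hxX
  by_cases hxY : x ∈ Y
  · exact hqY x hxY
  · exact hqvan x (Finset.mem_sdiff.mpr ⟨hxX, hxY⟩)
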